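/- If H is a finite index subgroup of a group K, x is an element of H, and the H-conjugacy class x^H = {h⁻¹xh : h ∈ H} is closed in the profinite topology on H, then the K-conjugacy class x^K is closed in the profinite topology on K. -/

import Mathlib

/-- A subset `S` of a group is closed in the profinite topology: for every element outside `S`
there is a finite index normal subgroup whose coset around that element misses `S`. -/
def ProfClosed {G : Type*} [Group G] (S : Set G) : Prop :=
  ∀ x ∉ S, ∃ N : Subgroup G, N.Normal ∧ N.FiniteIndex ∧ ∀ n ∈ N, x * n ∉ S

theorem conjClass_closed_of_finiteIndex {K : Type*} [Group K] (H : Subgroup K)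
    (hfi : H.FiniteIndex) (x : H)
    (hH : ProfClosed {y : H | ∃ h : H, y = h⁻¹ * x * h}) :
    ProfClosed {y : K | ∃ k : K, y = k⁻¹ * (x : K) * k} := by
  haveI := hfi
  intro y hy
  -- For each coset `q : K ⧸ H`, with representative `r`, consider `z = r⁻¹ y r` and find a
  -- finite index normal subgroup `N q` of `K` whose `z`-coset avoids all `H`-conjugates of `x`.
  have key : ∀ q : K ⧸ H, ∃ N : Subgroup K, N.Normal ∧ N.FiniteIndex ∧
      ∀ n ∈ N, ∀ h : H, (q.out)⁻¹ * y * q.out * n ≠ (h : K)⁻¹ * (x : K) * h := by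
    intro q
    set r : K := q.out with hr
    set z : K := r⁻¹ * y * r with hz
    by_cases hzH : z ∈ H
    · -- `z ∈ H` and `z` is not an `H`-conjugate of `x`
      have hzx : (⟨z, hzH⟩ : H) ∉ {y : H | ∃ h : H, y = h⁻¹ * x * h} := by
        rintro ⟨h, hh⟩
        apply hy
        have hzc : z = (h : K)⁻¹ * (x : K) * h := by
          have := congrArg (Subtype.val) hh
          push_cast at this
          exact this
        refine ⟨(h : K) * r⁻¹, ?_⟩
        have hyz : y = r * z * r⁻¹ := by rw [hz]; group
        rw [hyz, hzc]; group
      obtain ⟨N', hN'n, hN'f, hN'⟩ := hH _ hzx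
      refine ⟨(N'.map H.subtype).normalCore, Subgroup.normalCore_normal _, ?_, ?_⟩
      · have : (N'.map H.subtype).FiniteIndex := by
          constructor
          rw [Subgroup.index_map_subtype]
          exact mul_ne_zero hN'f.index_ne_zero hfi.index_ne_zero
        exact Subgroup.finiteIndex_normalCore _
      · intro n hn h heq
        have hn' : n ∈ N'.map H.subtype := Subgroup.normalCore_le _ hn
        obtain ⟨m, hm, rfl⟩ := hn'
        refine hN' m hm ⟨h, ?_⟩
        apply Subtype.ext
        push_cast
        exact heq
    · -- `z ∉ H`: use the normal core of `H`
      refine ⟨H.normalCore, Subgroup.normalCore_normal _, Subgroup.finiteIndex_normalCore _, ?_⟩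
      intro n hn h heq
      apply hzH
      have hnH : n ∈ H := Subgroup.normalCore_le H hn
      have : z * n ∈ H := heq ▸ mul_mem (mul_mem (inv_mem h.2) x.2) h.2
      simpa using mul_mem this (inv_mem hnH)
  choose N hNnorm hNfi hN using key
  haveI : Finite (K ⧸ H) := H.finite_quotient_of_finiteIndex
  refine ⟨⨅ q, N q, ?_, ?_, ?_⟩
  · constructor
    intro n hn g
    rw [Subgroup.mem_iInf] at hn ⊢
    exact fun q => (hNnorm q).conj_mem n (hn q) g
  · exact Subgroup.finiteIndex_iInf fun q => hNfi q
  · rintro n hn ⟨k, hk⟩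
    set q : K ⧸ H := QuotientGroup.mk k⁻¹ with hq
    set r : K := q.out with hr
    have hout : (QuotientGroup.mk r : K ⧸ H) = QuotientGroup.mk k⁻¹ := q.out_eq'
    have hrk : r⁻¹ * k⁻¹ ∈ H := by rwa [QuotientGroup.eq] at hout
    have hnq : r⁻¹ * n * r ∈ N q := by
      have := (hNnorm q).conj_mem n (Subgroup.mem_iInf.mp hn q) r⁻¹
      simpa using this
    refine hN q (r⁻¹ * n * r) hnq (⟨r⁻¹ * k⁻¹, hrk⟩ : H)⁻¹ ?_
    have hcoe : (((⟨r⁻¹ * k⁻¹, hrk⟩ : H)⁻¹ : H) : K) = (r⁻¹ * k⁻¹)⁻¹ := rfl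
    rw [hcoe, show r⁻¹ * y * r * (r⁻¹ * n * r) = r⁻¹ * (y * n) * r by group, hk]
    group
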